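/- Let X be a real random variable whose distribution is uniform on each interval [m_t, m_{t+1}] with density p_t, where m_0 = 0, m_{T+1} = V, m_t = (tV - v)/T for 1 ≤ t ≤ T, v ∈ [0, V], and p_0 = p_T. Then E[X - (V/T)·⌊(T·X + v)/V⌋] = (∑_{j=0}^{T-1} p_j) · ((V - v)^2 - v^2)/(2T^2). -/

import Mathlib

open MeasureTheory

lemma aux_int (a b c d : ℝ) (hab : a ≤ b) :
    ∫ x in Set.Ioo a b, d * (x - c) = d * ((b^2 - a^2)/2 - c * (b - a)) := by
  rw [← integral_Ioc_eq_integral_Ioo, ← intervalIntegral.integral_of_le hab,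
    intervalIntegral.integral_const_mul,
    intervalIntegral.integral_sub intervalIntegral.intervalIntegrable_id
      (intervalIntegrable_const (c := c)),
    integral_id, intervalIntegral.integral_const]
  simp [smul_eq_mul, mul_comm]

theorem stmt_17 {Ω : Type*} [MeasureSpace Ω] [IsProbabilityMeasure (volume : Measure Ω)]
    (V : ℝ) (hV : 0 < V) (T : ℕ) (hT : 1 ≤ T) (v : ℝ) (hv : v ∈ Set.Icc 0 V)
    (m : ℕ → ℝ) (hm0 : m 0 = 0) (hmTop : m (T + 1) = V)
    (hm : ∀ t, 1 ≤ t → t ≤ T → m t = (t * V - v) / T)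
    (p : ℕ → ℝ) (hp : ∀ t, 0 ≤ p t) (hp0T : p 0 = p T)
    (X : Ω → ℝ) (hXm : Measurable X)
    (hlaw : Measure.map X (volume : Measure Ω) =
      volume.withDensity (fun x => ∑ t ∈ Finset.range (T + 1),
        Set.indicator (Set.Ioo (m t) (m (t + 1))) (fun _ => ENNReal.ofReal (p t)) x)) :
    (∫ ω : Ω, (X ω - (V / T) * ⌊(T * X ω + v) / V⌋) ∂(volume : Measure Ω)) =
      (∑ j ∈ Finset.range T, p j) * (((V - v) ^ 2 - v ^ 2) / (2 * T ^ 2)) := by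
  obtain ⟨hv0, hvV⟩ := hv
  have hT0 : (0:ℝ) < (T:ℝ) := by exact_mod_cast hT
  set g : ℝ → ℝ := fun x => x - (V / T) * ⌊(T * x + v) / V⌋ with hgdef
  have hgm : Measurable g :=
    measurable_id.sub ((measurable_from_top.comp
      (((measurable_id.const_mul (T:ℝ)).add_const v).div_const V).floor).const_mul (V / T))
  -- floor is constant on each interval
  have hfloor : ∀ t, t ≤ T → ∀ x ∈ Set.Ioo (m t) (m (t+1)), g x = x - (V / T) * t := by
    intro t ht x hx
    have h1 : ⌊((T:ℝ) * x + v) / V⌋ = (t : ℤ) := by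
      rw [Int.floor_eq_iff]
      push_cast
      constructor
      · rw [le_div_iff₀ hV]
        rcases Nat.eq_zero_or_pos t with rfl | ht1
        · have : (0:ℝ) < x := hm0 ▸ hx.1
          push_cast
          nlinarith
        · have hx1 := hx.1
          rw [hm t ht1 ht] at hx1
          have := (div_lt_iff₀ hT0).mp hx1
          nlinarith
      · rw [div_lt_iff₀ hV]
        rcases eq_or_lt_of_le ht with rfl | htT
        · have hx2 := hx.2
          rw [hmTop] at hx2
          nlinarith
        · have hx2 := hx.2
          rw [hm (t+1) (by omega) (by omega)] at hx2
          have := (lt_div_iff₀ hT0).mp hx2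
          push_cast at this ⊢
          nlinarith
    simp only [hgdef, h1, Int.cast_natCast]
  -- monotonicity
  have hmono : ∀ t, t ≤ T → m t ≤ m (t+1) := by
    intro t ht
    rcases Nat.eq_zero_or_pos t with rfl | ht1
    · rw [hm0, hm 1 le_rfl hT]
      apply div_nonneg _ hT0.le
      push_cast
      nlinarith
    · rcases eq_or_lt_of_le ht with rfl | htT
      · rw [hm t ht1 le_rfl, hmTop, div_le_iff₀ hT0]
        nlinarith
      · rw [hm t ht1 ht, hm (t+1) (by omega) (by omega)]
        gcongr
        push_cast
        nlinarith
  -- NNReal density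
  set f : ℝ → NNReal := fun x => ∑ t ∈ Finset.range (T+1),
      (Set.Ioo (m t) (m (t+1))).indicator (fun _ => (p t).toNNReal) x with hfdef
  have hfm : Measurable f :=
    Finset.measurable_sum _ (fun t _ => Measurable.indicator measurable_const measurableSet_Ioo)
  have hlaw' : Measure.map X (volume : Measure Ω) =
      volume.withDensity (fun x => ((f x : NNReal) : ENNReal)) := by
    rw [hlaw]; congr 1; funext x
    simp only [hfdef, ENNReal.coe_finset_sum]
    refine Finset.sum_congr rfl fun t _ => ?_
    by_cases hx : x ∈ Set.Ioo (m t) (m (t+1)) <;>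
      simp [Set.indicator, hx, ENNReal.ofReal]
  have step : (∫ ω : Ω, g (X ω) ∂(volume : Measure Ω)) =
      ∑ t ∈ Finset.range (T+1), ∫ x, (Set.Ioo (m t) (m (t+1))).indicator
        (fun y => p t * (y - (V/T)*t)) x := by
    rw [← integral_map hXm.aemeasurable hgm.aestronglyMeasurable, hlaw',
      integral_withDensity_eq_integral_smul hfm g]
    rw [← integral_finset_sum]
    · refine integral_congr_ae (Filter.Eventually.of_forall fun x => ?_)
      simp only [hfdef]
      rw [Finset.sum_smul]
      refine Finset.sum_congr rfl fun t ht => ?_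
      by_cases hx : x ∈ Set.Ioo (m t) (m (t+1))
      · rw [Set.indicator_of_mem hx, Set.indicator_of_mem hx,
          hfloor t (Finset.mem_range_succ_iff.mp ht) x hx]
        simp [NNReal.smul_def, Real.coe_toNNReal _ (hp t)]
      · simp [Set.indicator_of_notMem hx]
    · intro t ht
      rw [integrable_indicator_iff measurableSet_Ioo]
      exact ((continuous_const.mul (continuous_id.sub continuous_const)).integrableOn_Icc).mono_set
        Set.Ioo_subset_Icc_self
  have step2 : (∫ ω : Ω, g (X ω) ∂(volume : Measure Ω)) =
      ∑ t ∈ Finset.range (T+1),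
        p t * (((m (t+1))^2 - (m t)^2)/2 - (V/T*t) * (m (t+1) - m t)) := by
    rw [step]
    refine Finset.sum_congr rfl fun t ht => ?_
    rw [integral_indicator measurableSet_Ioo,
      aux_int _ _ _ _ (hmono t (Finset.mem_range_succ_iff.mp ht))]
  show (∫ ω : Ω, g (X ω) ∂(volume : Measure Ω)) = _
  rw [step2]
  -- final algebra
  obtain ⟨S, rfl⟩ : ∃ S, T = S + 1 := ⟨T - 1, by omega⟩
  have hTne : ((S:ℝ) + 1) ≠ 0 := by positivity
  have hm1 : m 1 = ((1:ℝ) * V - v) / ((S:ℝ)+1) := by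
    rw [hm 1 le_rfl (by omega)]; push_cast; ring_nf
  have hmS : m (S+1) = (((S:ℝ)+1) * V - v) / ((S:ℝ)+1) := by
    rw [hm (S+1) (by omega) le_rfl]; push_cast; ring_nf
  have hmid : ∀ i ∈ Finset.range S,
      p (i+1) * (((m (i+1+1))^2 - (m (i+1))^2)/2 - (V/(S+1:ℕ)*(i+1:ℕ)) * (m (i+1+1) - m (i+1)))
      = p (i+1) * (((V - v) ^ 2 - v ^ 2) / (2 * ((S:ℝ)+1) ^ 2)) := by
    intro i hi
    have hi' := Finset.mem_range.mp hi
    rw [hm (i+1) (by omega) (by omega), hm (i+2) (by omega) (by omega)]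
    push_cast
    field_simp
    ring
  rw [Finset.sum_range_succ, Finset.sum_range_succ', Finset.sum_mul, Finset.sum_range_succ']
  rw [Finset.sum_congr rfl hmid]
  rw [hm0, hm1, hmS, hmTop]
  rw [show p (S+1) = p 0 from hp0T.symm]
  push_cast
  field_simp
  ring_nf
  simp only [mul_comm, mul_assoc, mul_left_comm]
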